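/- Under the modified flow with constants $a, b, c > 0$, a sphere of radius $R$ evolves by $(R^2)' = 2e^{aR^2/m}(bR^2 - mc)$. If $bR_0^2 < mc$, then for all $t$ in the (maximal) domain of the solution, $t \leq T_1 := \frac{m}{2ab\big(\frac{c}{b}m - R_0^2\big)}\big(1 - e^{-aR_0^2/m}\big)$. -/

import Mathlib

open Real Set

/-- For the modified flow with constants `a, b, c > 0`, a sphere of radius `R`
evolves by `(R²)' = 2 e^{aR²/m}(bR² - mc)`. If `bR₀² < mc`, the existence time is
at most `T₁ = m (1 - e^{-aR₀²/m}) / (2ab((c/b)m - R₀²))`. -/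
theorem modified_flow_shrinking_time_bound (m a b c R0sq δ : ℝ) (hm : 0 < m)
    (ha : 0 < a) (hb : 0 < b) (hc : 0 < c) (hR0 : 0 ≤ R0sq) (hRm : R0sq < c / b * m)
    (u : ℝ → ℝ) (hu0 : u 0 = R0sq) (hnonneg : ∀ t ∈ Ico (0 : ℝ) δ, 0 ≤ u t)
    (hode : ∀ t ∈ Ico (0 : ℝ) δ,
      HasDerivAt u (2 * exp (a * u t / m) * (b * u t - m * c)) t) :
    δ ≤ m / (2 * a * b * (c / b * m - R0sq)) * (1 - exp (-(a * R0sq) / m)) := by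
  have hm' : m ≠ 0 := hm.ne'
  have hb' : b ≠ 0 := hb.ne'
  have hD : 0 < c / b * m - R0sq := by linarith
  have hbD : m * c - b * R0sq = b * (c / b * m - R0sq) := by field_simp
  set E := exp (-(a * R0sq) / m) with hE
  have hE1 : E ≤ 1 := by
    rw [hE, Real.exp_le_one_iff]
    have : 0 ≤ a * R0sq := by positivity
    have : -(a * R0sq) ≤ 0 := by linarith
    exact div_nonpos_of_nonpos_of_nonneg this hm.le
  set T1 := m / (2 * a * b * (c / b * m - R0sq)) * (1 - E) with hT1
  have hT1nn : 0 ≤ T1 := by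
    rw [hT1]
    have h1 : 0 ≤ 1 - E := by linarith
    positivity
  by_contra hδ
  push_neg at hδ
  -- continuity of u on intervals
  have hcont : ∀ T ∈ Ico (0 : ℝ) δ, ContinuousOn u (Icc 0 T) := by
    intro T hT x hx
    exact ((hode x ⟨hx.1, lt_of_le_of_lt hx.2 hT.2⟩).continuousAt).continuousWithinAt
  -- step 1: u stays below c/b*m
  have hlt : ∀ t ∈ Ico (0 : ℝ) δ, u t < c / b * m := by
    intro T hT
    by_contra hge
    push_neg at hge
    set S := Icc (0 : ℝ) T ∩ u ⁻¹' Ici (c / b * m) with hS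
    have hSne : S.Nonempty := ⟨T, ⟨hT.1, le_refl T⟩, hge⟩
    have hSbdd : BddBelow S := ⟨0, fun x hx => hx.1.1⟩
    have hSclosed : IsClosed S :=
      (hcont T hT).preimage_isClosed_of_isClosed isClosed_Icc isClosed_Ici
    have hs := hSclosed.csInf_mem hSne hSbdd
    set s := sInf S with hsdef
    have hsIcc : s ∈ Icc 0 T := hs.1
    have hsu : c / b * m ≤ u s := hs.2
    have hs0 : 0 < s := by
      rcases hsIcc.1.lt_or_eq with h | h
      · exact h
      · exfalso
        rw [← h, hu0] at hsu
        linarith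
    have hanti : AntitoneOn u (Icc 0 s) := by
      apply antitoneOn_of_deriv_nonpos (convex_Icc 0 s)
        ((hcont T hT).mono (Icc_subset_Icc le_rfl hsIcc.2))
      · intro x hx
        rw [interior_Icc] at hx
        have hxI : x ∈ Ico (0 : ℝ) δ :=
          ⟨hx.1.le, lt_of_lt_of_le hx.2 (hsIcc.2.trans hT.2.le)⟩
        exact (hode x hxI).differentiableAt.differentiableWithinAt
      · intro x hx
        rw [interior_Icc] at hx
        have hxI : x ∈ Ico (0 : ℝ) δ :=
          ⟨hx.1.le, lt_of_lt_of_le hx.2 (hsIcc.2.trans hT.2.le)⟩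
        have hux : u x < c / b * m := by
          by_contra h
          push_neg at h
          have hxS : x ∈ S := ⟨⟨hx.1.le, hx.2.le.trans hsIcc.2⟩, h⟩
          have := csInf_le hSbdd hxS
          linarith [hx.2]
        rw [(hode x hxI).deriv]
        have hneg : b * u x - m * c < 0 := by
          have h2 := mul_lt_mul_of_pos_left hux hb
          have h3 : b * (c / b * m) = m * c := by field_simp
          linarith
        have hexp : 0 < exp (a * u x / m) := exp_pos _
        nlinarith
    have h4 : u s ≤ u 0 := hanti ⟨le_refl 0, hs0.le⟩ ⟨hs0.le, le_refl s⟩ hs0.le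
    rw [hu0] at h4
    linarith
  -- step 2: u stays below R0sq
  have hle : ∀ t ∈ Ico (0 : ℝ) δ, u t ≤ R0sq := by
    intro T hT
    have hanti : AntitoneOn u (Icc 0 T) := by
      apply antitoneOn_of_deriv_nonpos (convex_Icc 0 T) (hcont T hT)
      · intro x hx
        rw [interior_Icc] at hx
        have hxI : x ∈ Ico (0 : ℝ) δ := ⟨hx.1.le, hx.2.trans hT.2⟩
        exact (hode x hxI).differentiableAt.differentiableWithinAt
      · intro x hx
        rw [interior_Icc] at hx
        have hxI : x ∈ Ico (0 : ℝ) δ := ⟨hx.1.le, hx.2.trans hT.2⟩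
        have hux := hlt x hxI
        rw [(hode x hxI).deriv]
        have hneg : b * u x - m * c < 0 := by
          have h2 := mul_lt_mul_of_pos_left hux hb
          have h3 : b * (c / b * m) = m * c := by field_simp
          linarith
        have hexp : 0 < exp (a * u x / m) := exp_pos _
        nlinarith
    have h4 : u T ≤ u 0 := hanti ⟨le_refl 0, hT.1⟩ ⟨hT.1, le_refl T⟩ hT.1
    rw [hu0] at h4
    exact h4
  -- step 3: the function v = exp(-a/m * u) has derivative (2a/m)(mc - b u)
  set v := fun t => exp (-a / m * u t) with hv
  have hvderiv : ∀ t ∈ Ico (0 : ℝ) δ,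
      HasDerivAt v (2 * a / m * (m * c - b * u t)) t := by
    intro t ht
    have h1 := ((hode t ht).const_mul (-a / m)).exp
    convert h1 using 1
    have hcancel : exp (-a / m * u t) * exp (a * u t / m) = 1 := by
      rw [← Real.exp_add, show -a / m * u t + a * u t / m = 0 by ring, Real.exp_zero]
    linear_combination (-(2 * a / m * (m * c - b * u t))) * hcancel
  set K := 2 * a / m * (m * c - b * R0sq) with hK
  have hKpos : 0 < K := by
    rw [hK, hbD]
    positivity
  -- mean value bound on each [0, t]
  have key : ∀ t ∈ Ico (0 : ℝ) δ, K * t ≤ 1 - E := by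
    intro T hT
    have hmv : ∀ x ∈ Icc (0 : ℝ) T, ∀ y ∈ Icc (0 : ℝ) T, x ≤ y →
        K * (y - x) ≤ v y - v x := by
      apply Convex.mul_sub_le_image_sub_of_le_deriv (convex_Icc 0 T)
      · intro x hx
        have hxI : x ∈ Ico (0 : ℝ) δ := ⟨hx.1, lt_of_le_of_lt hx.2 hT.2⟩
        exact ((hvderiv x hxI).continuousAt).continuousWithinAt
      · intro x hx
        rw [interior_Icc] at hx
        have hxI : x ∈ Ico (0 : ℝ) δ := ⟨hx.1.le, hx.2.trans hT.2⟩
        exact (hvderiv x hxI).differentiableAt.differentiableWithinAt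
      · intro x hx
        rw [interior_Icc] at hx
        have hxI : x ∈ Ico (0 : ℝ) δ := ⟨hx.1.le, hx.2.trans hT.2⟩
        rw [(hvderiv x hxI).deriv, hK]
        have h5 := hle x hxI
        have h6 : 0 ≤ 2 * a / m := by positivity
        have h7 : m * c - b * R0sq ≤ m * c - b * u x := by nlinarith
        exact mul_le_mul_of_nonneg_left h7 h6
    have h7 := hmv 0 ⟨le_refl 0, hT.1⟩ T ⟨hT.1, le_refl T⟩ hT.1
    have hv0 : v 0 = E := by
      simp only [hv, hE, hu0]
      congr 1
      ring
    have hvT : v T ≤ 1 := by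
      simp only [hv]
      rw [Real.exp_le_one_iff]
      have h8 := hnonneg T hT
      have h9 : 0 ≤ a / m * u T := by positivity
      have h10 : -a / m * u T = -(a / m * u T) := by ring
      rw [h10]
      linarith
    rw [hv0] at h7
    simp only [sub_zero] at h7
    linarith
  -- conclude
  have hKT1 : K * T1 = 1 - E := by
    have h2 : K * (m / (2 * a * b * (c / b * m - R0sq))) = 1 := by
      rw [hK, hbD]
      have hpos : 0 < c * m - b * R0sq := by
        have := mul_pos hb hD
        linarith [hbD]
      have hne : m * (2 * a * b * (c * m - b * R0sq)) ≠ 0 := by positivity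
      field_simp
      exact div_self (by rw [mul_comm m c]; exact hpos.ne')
    calc K * T1 = (K * (m / (2 * a * b * (c / b * m - R0sq)))) * (1 - E) := by
          rw [hT1]; ring
      _ = 1 - E := by rw [h2, one_mul]
  have ht0 : (T1 + δ) / 2 ∈ Ico (0 : ℝ) δ := by
    constructor
    · linarith
    · linarith
  have h10 := key _ ht0
  rw [← hKT1] at h10
  have h11 : (T1 + δ) / 2 ≤ T1 := le_of_mul_le_mul_left h10 hKpos
  linarith
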